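/- Let J, K ≥ 1 be integers and α_k(x) := x^{k−1}·∑_{ℓ=k}^{K} C(ℓ−1,k−1)(1−x)^{ℓ−k}. Suppose (p_{j|k})_{j∈[J],k∈[K]} are integrable functions on [0,1] with y ↦ p_{j|k}(y)/y integrable, satisfying for all x ∈ [0,1] and k ∈ [K]: p_{j|k}(x) ≥ 0; p_{j|k}(x) ≤ ∫_0^x (1/y)·∑_{ℓ=1}^K [p_{(j+1)|ℓ}(y) − p_{j|ℓ}(y)] dy for 1 ≤ j < J; and p_{J|k}(x) ≤ 1 − ∫_0^x (1/y)·∑_{ℓ=1}^K p_{J|ℓ}(y) dy. Suppose (q_{j|k})_{j∈[J],k∈[K]} are integrable functions satisfying for all x ∈ (0,1] and k ∈ [K]: q_{j|k}(x) ≥ 0; q_{1|k}(x) + (1/x)·∫_x^1 ∑_{ℓ=1}^K q_{1|ℓ}(y) dy ≥ α_k(x); and q_{j|k}(x) + (1/x)·∫_x^1 ∑_{ℓ=1}^K [q_{j|ℓ}(y) − q_{(j−1)|ℓ}(y)] dy ≥ α_k(x) for 1 < j ≤ J. Then ∑_{j=1}^J ∑_{k=1}^K ∫_0^1 α_k(x)·p_{j|k}(x)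 dx ≤ ∑_{k=1}^K ∫_0^1 q_{J|k}(x) dx. -/

import Mathlib

open MeasureTheory intervalIntegral

private lemma fubini_swap_aux (f g : ℝ → ℝ)
    (hf : IntegrableOn f (Set.Ioc (0:ℝ) 1) volume)
    (hg : IntegrableOn g (Set.Ioc (0:ℝ) 1) volume) :
    ∫ x in Set.Ioc (0:ℝ) 1, f x * ∫ y in Set.Ioc x 1, g y
      = ∫ y in Set.Ioc (0:ℝ) 1, g y * ∫ x in Set.Ioc (0:ℝ) y, f x := by
  set μ : Measure ℝ := volume.restrict (Set.Ioc (0:ℝ) 1) with hμ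
  set s : Set (ℝ × ℝ) := {z : ℝ × ℝ | z.1 < z.2} with hs
  have hsm : MeasurableSet s := measurableSet_lt measurable_fst measurable_snd
  have hint : Integrable (Function.uncurry fun x y =>
      s.indicator (fun z : ℝ × ℝ => f z.1 * g z.2) (x, y)) (μ.prod μ) := by
    have h1 : Integrable (fun z : ℝ × ℝ => f z.1 * g z.2) (μ.prod μ) := hf.mul_prod hg
    exact h1.indicator hsm
  have swap := MeasureTheory.integral_integral_swap hint
  have hL : (∫ x, ∫ y, s.indicator (fun z : ℝ × ℝ => f z.1 * g z.2) (x, y) ∂μ ∂μ)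
      = ∫ x in Set.Ioc (0:ℝ) 1, f x * ∫ y in Set.Ioc x 1, g y := by
    rw [hμ]
    refine setIntegral_congr_ae measurableSet_Ioc ?_
    filter_upwards with x hx
    have h1 : ∀ y : ℝ, s.indicator (fun z : ℝ × ℝ => f z.1 * g z.2) (x, y)
        = Set.indicator (Set.Ioi x) (fun y => f x * g y) y := by
      intro y
      by_cases h : x < y <;> simp [hs, Set.indicator, h]
    simp_rw [h1]
    rw [MeasureTheory.integral_indicator measurableSet_Ioi,
      Measure.restrict_restrict measurableSet_Ioi]
    have : Set.Ioi x ∩ Set.Ioc (0:ℝ) 1 = Set.Ioc x 1 := by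
      ext y; simp only [Set.mem_inter_iff, Set.mem_Ioi, Set.mem_Ioc]
      constructor
      · rintro ⟨h1, _, h3⟩; exact ⟨h1, h3⟩
      · rintro ⟨h1, h3⟩; exact ⟨h1, lt_trans hx.1 h1, h3⟩
    rw [this, MeasureTheory.integral_const_mul]
  have hR : (∫ y, ∫ x, s.indicator (fun z : ℝ × ℝ => f z.1 * g z.2) (x, y) ∂μ ∂μ)
      = ∫ y in Set.Ioc (0:ℝ) 1, g y * ∫ x in Set.Ioc (0:ℝ) y, f x := by
    rw [hμ]
    refine setIntegral_congr_ae measurableSet_Ioc ?_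
    filter_upwards with y hy
    have h1 : ∀ x : ℝ, s.indicator (fun z : ℝ × ℝ => f z.1 * g z.2) (x, y)
        = Set.indicator (Set.Iio y) (fun x => f x * g y) x := by
      intro x
      by_cases h : x < y <;> simp [hs, Set.indicator, h]
    simp_rw [h1]
    rw [MeasureTheory.integral_indicator measurableSet_Iio,
      Measure.restrict_restrict measurableSet_Iio]
    have : Set.Iio y ∩ Set.Ioc (0:ℝ) 1 = Set.Ioo 0 y := by
      ext x; simp only [Set.mem_inter_iff, Set.mem_Iio, Set.mem_Ioc, Set.mem_Ioo]
      constructor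
      · rintro ⟨h1, h2, _⟩; exact ⟨h2, h1⟩
      · rintro ⟨h2, h1⟩; exact ⟨h1, h2, le_trans (le_of_lt h1) hy.2⟩
    rw [this, ← integral_Ioc_eq_integral_Ioo]
    rw [show (∫ x in Set.Ioc (0:ℝ) y, f x * g y) = (∫ x in Set.Ioc (0:ℝ) y, f x) * g y from
      MeasureTheory.integral_mul_const _ _, mul_comm]
  rw [← hL, ← hR]
  exact swap

private lemma integrableOn_mul_bdd {f g : ℝ → ℝ} {s : Set ℝ} (hs : MeasurableSet s)
    (hg : IntegrableOn g s volume) (hf : AEStronglyMeasurable f (volume.restrict s))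
    {c : ℝ} (hbd : ∀ x ∈ s, ‖f x‖ ≤ c) :
    IntegrableOn (fun x => f x * g x) s volume := by
  exact Integrable.bdd_mul hg hf ((ae_restrict_mem hs).mono fun x hx => hbd x hx)

private lemma integrableOn_mul_bdd' {f g : ℝ → ℝ} {s : Set ℝ} (hs : MeasurableSet s)
    (hg : IntegrableOn g s volume) (hf : AEStronglyMeasurable f (volume.restrict s))
    {c : ℝ} (hbd : ∀ x ∈ s, ‖f x‖ ≤ c) :
    IntegrableOn (fun x => g x * f x) s volume :=
  (integrableOn_mul_bdd hs hg hf hbd).congr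
    (Filter.Eventually.of_forall fun x => mul_comm _ _)

private noncomputable def Pfun (K : ℕ) (p : ℕ → ℕ → ℝ → ℝ) (j : ℕ) (x : ℝ) : ℝ :=
  ∑ ℓ ∈ Finset.Icc 1 K, p j ℓ x

private noncomputable def Qfun (K : ℕ) (q : ℕ → ℕ → ℝ → ℝ) (j : ℕ) (y : ℝ) : ℝ :=
  if j = 0 then 0 else ∑ ℓ ∈ Finset.Icc 1 K, q j ℓ y

private noncomputable def Sfun (K : ℕ) (p : ℕ → ℕ → ℝ → ℝ) (j : ℕ) (x : ℝ) : ℝ :=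
  ∫ y in Set.Ioc (0:ℝ) x, Pfun K p j y / y

private noncomputable def Rfun (K : ℕ) (q : ℕ → ℕ → ℝ → ℝ) (j : ℕ) (x : ℝ) : ℝ :=
  ∫ y in Set.Ioc x (1:ℝ), (Qfun K q j y - Qfun K q (j-1) y)

theorem weak_duality_CP_CD_JK
    (J K : ℕ) (hJ : 1 ≤ J) (hK : 1 ≤ K)
    (α : ℕ → ℝ → ℝ)
    (hα : ∀ k ∈ Finset.Icc 1 K, ∀ x : ℝ,
      α k x = x ^ (k - 1) *
        ∑ ℓ ∈ Finset.Icc k K, ((ℓ - 1).choose (k - 1) : ℝ) * (1 - x) ^ (ℓ - k))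
    (p q : ℕ → ℕ → ℝ → ℝ)
    -- integrability assumptions
    (hp_int : ∀ j ∈ Finset.Icc 1 J, ∀ k ∈ Finset.Icc 1 K,
      IntervalIntegrable (p j k) volume 0 1)
    (hp_div_int : ∀ j ∈ Finset.Icc 1 J, ∀ k ∈ Finset.Icc 1 K,
      IntegrableOn (fun y => p j k y / y) (Set.Ioc (0 : ℝ) 1) volume)
    (hq_int : ∀ j ∈ Finset.Icc 1 J, ∀ k ∈ Finset.Icc 1 K,
      IntervalIntegrable (q j k) volume 0 1)
    -- primal feasibility
    (hp_nonneg : ∀ j ∈ Finset.Icc 1 J, ∀ k ∈ Finset.Icc 1 K,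
      ∀ x ∈ Set.Icc (0 : ℝ) 1, 0 ≤ p j k x)
    (hp_mid : ∀ j : ℕ, 1 ≤ j → j < J → ∀ k ∈ Finset.Icc 1 K, ∀ x ∈ Set.Icc (0 : ℝ) 1,
      p j k x ≤ ∫ y in (0 : ℝ)..x,
        (1 / y) * ∑ ℓ ∈ Finset.Icc 1 K, (p (j + 1) ℓ y - p j ℓ y))
    (hp_last : ∀ k ∈ Finset.Icc 1 K, ∀ x ∈ Set.Icc (0 : ℝ) 1,
      p J k x ≤ 1 - ∫ y in (0 : ℝ)..x, (1 / y) * ∑ ℓ ∈ Finset.Icc 1 K, p J ℓ y)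
    -- dual feasibility
    (hq_nonneg : ∀ j ∈ Finset.Icc 1 J, ∀ k ∈ Finset.Icc 1 K,
      ∀ x ∈ Set.Ioc (0 : ℝ) 1, 0 ≤ q j k x)
    (hq_first : ∀ k ∈ Finset.Icc 1 K, ∀ x ∈ Set.Ioc (0 : ℝ) 1,
      α k x ≤ q 1 k x + (1 / x) * ∫ y in x..(1 : ℝ), ∑ ℓ ∈ Finset.Icc 1 K, q 1 ℓ y)
    (hq_mid : ∀ j : ℕ, 1 < j → j ≤ J → ∀ k ∈ Finset.Icc 1 K, ∀ x ∈ Set.Ioc (0 : ℝ) 1,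
      α k x ≤ q j k x + (1 / x) *
        ∫ y in x..(1 : ℝ), ∑ ℓ ∈ Finset.Icc 1 K, (q j ℓ y - q (j - 1) ℓ y)) :
    ∑ j ∈ Finset.Icc 1 J, ∑ k ∈ Finset.Icc 1 K, (∫ x in (0 : ℝ)..1, α k x * p j k x)
      ≤ ∑ k ∈ Finset.Icc 1 K, ∫ x in (0 : ℝ)..1, q J k x := by
  have h01 : (0:ℝ) ≤ 1 := zero_le_one
  have hk1 : (1:ℕ) ∈ Finset.Icc 1 K := Finset.mem_Icc.mpr ⟨le_refl 1, hK⟩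
  have hmem : ∀ j, 1 ≤ j → j ≤ J → j ∈ Finset.Icc 1 J := fun j h1 h2 => Finset.mem_Icc.mpr ⟨h1, h2⟩
  have hIoc_sub : Set.Ioc (0:ℝ) 1 ⊆ Set.Icc (0:ℝ) 1 := Set.Ioc_subset_Icc_self
  -- integrability on Ioc 0 1
  have hp_int' : ∀ j, 1 ≤ j → j ≤ J → ∀ k ∈ Finset.Icc 1 K,
      IntegrableOn (p j k) (Set.Ioc (0:ℝ) 1) volume := fun j h1 h2 k hk =>
    (intervalIntegrable_iff_integrableOn_Ioc_of_le h01).mp (hp_int j (hmem j h1 h2) k hk)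
  have hq_int' : ∀ j, 1 ≤ j → j ≤ J → ∀ k ∈ Finset.Icc 1 K,
      IntegrableOn (q j k) (Set.Ioc (0:ℝ) 1) volume := fun j h1 h2 k hk =>
    (intervalIntegrable_iff_integrableOn_Ioc_of_le h01).mp (hq_int j (hmem j h1 h2) k hk)
  have hPdiv_int : ∀ j, 1 ≤ j → j ≤ J →
      IntegrableOn (fun y => Pfun K p j y / y) (Set.Ioc (0:ℝ) 1) volume := by
    intro j h1 h2
    have he : (fun y => Pfun K p j y / y) = fun y => ∑ ℓ ∈ Finset.Icc 1 K, p j ℓ y / y := by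
      funext y; simp only [Pfun]; exact Finset.sum_div _ _ _
    rw [he]
    exact integrable_finset_sum _ fun ℓ hℓ => hp_div_int j (hmem j h1 h2) ℓ hℓ
  have hQf_int : ∀ j, j ≤ J → IntegrableOn (Qfun K q j) (Set.Ioc (0:ℝ) 1) volume := by
    intro j h2
    by_cases hj : j = 0
    · have : Qfun K q j = fun _ => (0:ℝ) := by funext y; simp [Qfun, hj]
      rw [this]; exact integrableOn_zero
    · have : Qfun K q j = fun y => ∑ ℓ ∈ Finset.Icc 1 K, q j ℓ y := by
        funext y; simp [Qfun, hj]
      rw [this]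
      exact integrable_finset_sum _ fun ℓ hℓ => hq_int' j (Nat.one_le_iff_ne_zero.mpr hj) h2 ℓ hℓ
  -- primal constraints in terms of Sfun
  have hprim : ∀ j, 1 ≤ j → j < J → ∀ k ∈ Finset.Icc 1 K, ∀ x ∈ Set.Icc (0:ℝ) 1,
      p j k x ≤ Sfun K p (j+1) x - Sfun K p j x := by
    intro j h1 h2 k hk x hx
    have h := hp_mid j h1 h2 k hk x hx
    have e : (∫ y in (0:ℝ)..x, (1 / y) * ∑ ℓ ∈ Finset.Icc 1 K, (p (j + 1) ℓ y - p j ℓ y))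
        = Sfun K p (j+1) x - Sfun K p j x := by
      rw [intervalIntegral.integral_of_le hx.1]
      have e2 : Set.EqOn (fun y => (1 / y) * ∑ ℓ ∈ Finset.Icc 1 K, (p (j + 1) ℓ y - p j ℓ y))
          (fun y => Pfun K p (j+1) y / y - Pfun K p j y / y) (Set.Ioc (0:ℝ) x) := by
        intro y _
        simp only [Pfun]
        rw [Finset.sum_sub_distrib, one_div, inv_mul_eq_div, sub_div]
      rw [setIntegral_congr_fun measurableSet_Ioc e2,
        integral_sub
          (((hPdiv_int (j+1) (by omega) (by omega)).mono_set (Set.Ioc_subset_Ioc_right hx.2)))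
          (((hPdiv_int j h1 (le_of_lt h2)).mono_set (Set.Ioc_subset_Ioc_right hx.2)))]
      simp only [Sfun]
    rwa [e] at h
  have hprimJ : ∀ k ∈ Finset.Icc 1 K, ∀ x ∈ Set.Icc (0:ℝ) 1,
      p J k x ≤ 1 - Sfun K p J x := by
    intro k hk x hx
    have h := hp_last k hk x hx
    have e : (∫ y in (0:ℝ)..x, (1 / y) * ∑ ℓ ∈ Finset.Icc 1 K, p J ℓ y) = Sfun K p J x := by
      rw [intervalIntegral.integral_of_le hx.1]
      simp only [Sfun]
      apply setIntegral_congr_fun measurableSet_Ioc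
      intro y _
      simp only [Pfun]
      rw [one_div, inv_mul_eq_div]
    rwa [e] at h
  -- basic bounds on Sfun
  have hS_nonneg : ∀ j, 1 ≤ j → j ≤ J → ∀ x ∈ Set.Icc (0:ℝ) 1, 0 ≤ Sfun K p j x := by
    intro j h1 h2 x hx
    simp only [Sfun]
    apply setIntegral_nonneg measurableSet_Ioc
    intro y hy
    apply div_nonneg _ hy.1.le
    simp only [Pfun]
    exact Finset.sum_nonneg fun ℓ hℓ =>
      hp_nonneg j (hmem j h1 h2) ℓ hℓ y ⟨hy.1.le, le_trans hy.2 hx.2⟩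
  have hSbase : ∀ x ∈ Set.Icc (0:ℝ) 1, Sfun K p J x ≤ 1 := by
    intro x hx
    have h1 := hprimJ 1 hk1 x hx
    have h2 := hp_nonneg J (hmem J hJ le_rfl) 1 hk1 x hx
    linarith
  have hS_le_one : ∀ j, 1 ≤ j → j ≤ J → ∀ x ∈ Set.Icc (0:ℝ) 1, Sfun K p j x ≤ 1 := by
    have key : ∀ m j, 1 ≤ j → j ≤ J → J - j ≤ m → ∀ x ∈ Set.Icc (0:ℝ) 1, Sfun K p j x ≤ 1 := by
      intro m
      induction m with
      | zero =>
        intro j h1 h2 h3 x hx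
        have hjJ : j = J := by omega
        subst hjJ
        exact hSbase x hx
      | succ m ih =>
        intro j h1 h2 h3 x hx
        by_cases hjJ : j = J
        · subst hjJ; exact hSbase x hx
        · have hlt : j < J := lt_of_le_of_ne h2 hjJ
          have hd := hprim j h1 hlt 1 hk1 x hx
          have hp0 := hp_nonneg j (hmem j h1 h2) 1 hk1 x hx
          have hnext := ih (j+1) (by omega) (by omega) (by omega) x hx
          linarith
    exact fun j h1 h2 => key (J - j) j h1 h2 le_rfl
  have hp_le_one : ∀ j, 1 ≤ j → j ≤ J → ∀ k ∈ Finset.Icc 1 K, ∀ x ∈ Set.Icc (0:ℝ) 1,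
      p j k x ≤ 1 := by
    intro j h1 h2 k hk x hx
    by_cases hjJ : j = J
    · subst hjJ
      have ha := hprimJ k hk x hx
      have hb := hS_nonneg j h1 h2 x hx
      linarith
    · have hlt := lt_of_le_of_ne h2 hjJ
      have ha := hprim j h1 hlt k hk x hx
      have hb := hS_le_one (j+1) (by omega) (by omega) x hx
      have hc := hS_nonneg j h1 h2 x hx
      linarith
  -- continuity
  have hS_cont : ∀ j, 1 ≤ j → j ≤ J → ContinuousOn (Sfun K p j) (Set.Icc (0:ℝ) 1) := by
    intro j h1 h2
    exact intervalIntegral.continuousOn_primitive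
      ((integrableOn_Icc_iff_integrableOn_Ioc).mpr (hPdiv_int j h1 h2))
  have hS_meas : ∀ j, 1 ≤ j → j ≤ J →
      AEStronglyMeasurable (Sfun K p j) (volume.restrict (Set.Ioc (0:ℝ) 1)) := by
    intro j h1 h2
    exact ((hS_cont j h1 h2).aestronglyMeasurable measurableSet_Icc).mono_measure
      (Measure.restrict_mono hIoc_sub le_rfl)
  have hR_cont : ∀ j, 1 ≤ j → j ≤ J → ContinuousOn (Rfun K q j) (Set.Icc (0:ℝ) 1) := by
    intro j h1 h2
    have hg : IntegrableOn (fun y => Qfun K q j y - Qfun K q (j-1) y)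
        (Set.Ioc (0:ℝ) 1) volume :=
      (hQf_int j h2).sub (hQf_int (j-1) (le_trans (Nat.sub_le j 1) h2))
    have heq : Set.EqOn (Rfun K q j)
        (fun x => (∫ y in Set.Ioc (0:ℝ) 1, (Qfun K q j y - Qfun K q (j-1) y))
          - ∫ y in Set.Ioc (0:ℝ) x, (Qfun K q j y - Qfun K q (j-1) y))
        (Set.Icc (0:ℝ) 1) := by
      intro x hx
      have hu : Set.Ioc (0:ℝ) x ∪ Set.Ioc x 1 = Set.Ioc (0:ℝ) 1 :=
        Set.Ioc_union_Ioc_eq_Ioc hx.1 hx.2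
      have hsplit : (∫ y in Set.Ioc (0:ℝ) 1, (Qfun K q j y - Qfun K q (j-1) y))
          = (∫ y in Set.Ioc (0:ℝ) x, (Qfun K q j y - Qfun K q (j-1) y))
            + ∫ y in Set.Ioc x 1, (Qfun K q j y - Qfun K q (j-1) y) := by
        rw [← hu]
        exact setIntegral_union (Set.Ioc_disjoint_Ioc_of_le le_rfl) measurableSet_Ioc
          (hg.mono_set (by rw [← hu]; exact Set.subset_union_left))
          (hg.mono_set (by rw [← hu]; exact Set.subset_union_right))
      simp only [Rfun]
      linarith
    exact (continuousOn_const.sub (intervalIntegral.continuousOn_primitive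
      ((integrableOn_Icc_iff_integrableOn_Ioc).mpr hg))).congr heq
  have hR_meas : ∀ j, 1 ≤ j → j ≤ J →
      AEStronglyMeasurable (Rfun K q j) (volume.restrict (Set.Ioc (0:ℝ) 1)) := by
    intro j h1 h2
    exact ((hR_cont j h1 h2).aestronglyMeasurable measurableSet_Icc).mono_measure
      (Measure.restrict_mono hIoc_sub le_rfl)
  have hα_cont : ∀ k ∈ Finset.Icc 1 K, Continuous (α k) := by
    intro k hk
    have he : α k = fun x => x ^ (k - 1) *
        ∑ ℓ ∈ Finset.Icc k K, ((ℓ - 1).choose (k - 1) : ℝ) * (1 - x) ^ (ℓ - k) :=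
      funext (hα k hk)
    rw [he]
    exact (continuous_pow _).mul (continuous_finset_sum _ fun ℓ _ =>
      continuous_const.mul ((continuous_const.sub continuous_id).pow _))
  -- integrability of the various products
  have int_pq : ∀ j, 1 ≤ j → j ≤ J → ∀ k ∈ Finset.Icc 1 K,
      IntegrableOn (fun x => p j k x * q j k x) (Set.Ioc (0:ℝ) 1) volume := by
    intro j h1 h2 k hk
    refine integrableOn_mul_bdd measurableSet_Ioc (hq_int' j h1 h2 k hk)
      ((hp_int' j h1 h2 k hk).aestronglyMeasurable) (c := 1) ?_
    intro x hx
    rw [Real.norm_eq_abs, abs_le]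
    constructor
    · linarith [hp_nonneg j (hmem j h1 h2) k hk x (hIoc_sub hx)]
    · exact hp_le_one j h1 h2 k hk x (hIoc_sub hx)
  have int_Rp : ∀ j, 1 ≤ j → j ≤ J → ∀ k ∈ Finset.Icc 1 K,
      IntegrableOn (fun x => Rfun K q j x * (p j k x / x)) (Set.Ioc (0:ℝ) 1) volume := by
    intro j h1 h2 k hk
    obtain ⟨C, hC⟩ := isCompact_Icc.exists_bound_of_continuousOn (hR_cont j h1 h2)
    exact integrableOn_mul_bdd measurableSet_Ioc (hp_div_int j (hmem j h1 h2) k hk)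
      (hR_meas j h1 h2) (fun x hx => hC x (hIoc_sub hx))
  have int_αp : ∀ j, 1 ≤ j → j ≤ J → ∀ k ∈ Finset.Icc 1 K,
      IntegrableOn (fun x => α k x * p j k x) (Set.Ioc (0:ℝ) 1) volume := by
    intro j h1 h2 k hk
    obtain ⟨C, hC⟩ := isCompact_Icc.exists_bound_of_continuousOn
      ((hα_cont k hk).continuousOn (s := Set.Icc (0:ℝ) 1))
    exact integrableOn_mul_bdd measurableSet_Ioc (hp_int' j h1 h2 k hk)
      ((hα_cont k hk).aestronglyMeasurable.restrict) (fun x hx => hC x (hIoc_sub hx))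
  have int_qS : ∀ j, 1 ≤ j → j ≤ J → ∀ k ∈ Finset.Icc 1 K, ∀ js, 1 ≤ js → js ≤ J →
      IntegrableOn (fun x => q j k x * Sfun K p js x) (Set.Ioc (0:ℝ) 1) volume := by
    intro j h1 h2 k hk js hs1 hs2
    refine integrableOn_mul_bdd' measurableSet_Ioc (hq_int' j h1 h2 k hk)
      (hS_meas js hs1 hs2) (c := 1) ?_
    intro x hx
    rw [Real.norm_eq_abs, abs_le]
    exact ⟨by linarith [hS_nonneg js hs1 hs2 x (hIoc_sub hx)],
      hS_le_one js hs1 hs2 x (hIoc_sub hx)⟩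
  have int_QfS : ∀ jq, jq ≤ J → ∀ js, 1 ≤ js → js ≤ J →
      IntegrableOn (fun x => Qfun K q jq x * Sfun K p js x) (Set.Ioc (0:ℝ) 1) volume := by
    intro jq h2 js hs1 hs2
    by_cases hj : jq = 0
    · have : (fun x => Qfun K q jq x * Sfun K p js x) = fun _ => (0:ℝ) := by
        funext x; simp [Qfun, hj]
      rw [this]; exact integrableOn_zero
    · have : (fun x => Qfun K q jq x * Sfun K p js x)
          = fun x => ∑ ℓ ∈ Finset.Icc 1 K, q jq ℓ x * Sfun K p js x := by
        funext x; simp only [Qfun, hj, if_false]; exact Finset.sum_mul _ _ _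
      rw [this]
      exact integrable_finset_sum _ fun ℓ hℓ =>
        int_qS jq (Nat.one_le_iff_ne_zero.mpr hj) h2 ℓ hℓ js hs1 hs2
  have int_qdiff : ∀ j, 1 ≤ j → j < J → ∀ k ∈ Finset.Icc 1 K,
      IntegrableOn (fun x => q j k x * (Sfun K p (j+1) x - Sfun K p j x))
        (Set.Ioc (0:ℝ) 1) volume := by
    intro j h1 h2 k hk
    refine integrableOn_mul_bdd' measurableSet_Ioc (hq_int' j h1 (le_of_lt h2) k hk)
      (((hS_meas (j+1) (by omega) (by omega)).sub (hS_meas j h1 (le_of_lt h2)))) (c := 1) ?_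
    intro x hx
    rw [Real.norm_eq_abs, abs_le]
    constructor
    · have := hprim j h1 h2 1 hk1 x (hIoc_sub hx)
      have := hp_nonneg j (hmem j h1 (le_of_lt h2)) 1 hk1 x (hIoc_sub hx)
      linarith
    · have := hS_le_one (j+1) (by omega) (by omega) x (hIoc_sub hx)
      have := hS_nonneg j h1 (le_of_lt h2) x (hIoc_sub hx)
      linarith
  have int_q1S : ∀ k ∈ Finset.Icc 1 K,
      IntegrableOn (fun x => q J k x * (1 - Sfun K p J x)) (Set.Ioc (0:ℝ) 1) volume := by
    intro k hk
    refine integrableOn_mul_bdd' measurableSet_Ioc (hq_int' J hJ le_rfl k hk)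
      ((aestronglyMeasurable_const.sub (hS_meas J hJ le_rfl))) (c := 1) ?_
    intro x hx
    rw [Real.norm_eq_abs, abs_le]
    constructor
    · have := hSbase x (hIoc_sub hx); linarith
    · have := hS_nonneg J hJ le_rfl x (hIoc_sub hx); linarith
  -- dual constraint, uniform form
  have hdual : ∀ j, 1 ≤ j → j ≤ J → ∀ k ∈ Finset.Icc 1 K, ∀ x ∈ Set.Ioc (0:ℝ) 1,
      α k x ≤ q j k x + (1/x) * Rfun K q j x := by
    intro j h1 h2 k hk x hx
    rcases eq_or_lt_of_le h1 with h | h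
    · subst h
      have hh := hq_first k hk x hx
      have e : (∫ y in x..(1:ℝ), ∑ ℓ ∈ Finset.Icc 1 K, q 1 ℓ y) = Rfun K q 1 x := by
        simp only [Rfun]
        rw [intervalIntegral.integral_of_le hx.2]
        apply setIntegral_congr_fun measurableSet_Ioc
        intro y _
        simp [Qfun]
      rwa [e] at hh
    · have hh := hq_mid j h h2 k hk x hx
      have e : (∫ y in x..(1:ℝ), ∑ ℓ ∈ Finset.Icc 1 K, (q j ℓ y - q (j-1) ℓ y))
          = Rfun K q j x := by
        simp only [Rfun]
        rw [intervalIntegral.integral_of_le hx.2]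
        apply setIntegral_congr_fun measurableSet_Ioc
        intro y _
        have hj0 : ¬ (j = 0) := by omega
        have hj10 : ¬ (j - 1 = 0) := by omega
        simp [Qfun, hj0, hj10, Finset.sum_sub_distrib]
      rwa [e] at hh
  -- Step 1: per-j bound
  have step1 : ∀ j, 1 ≤ j → j ≤ J →
      (∑ k ∈ Finset.Icc 1 K, ∫ x in Set.Ioc (0:ℝ) 1, α k x * p j k x)
        ≤ (∑ k ∈ Finset.Icc 1 K, ∫ x in Set.Ioc (0:ℝ) 1, p j k x * q j k x)
          + ∫ x in Set.Ioc (0:ℝ) 1, Rfun K q j x * (Pfun K p j x / x) := by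
    intro j h1 h2
    have step1k : ∀ k ∈ Finset.Icc 1 K,
        (∫ x in Set.Ioc (0:ℝ) 1, α k x * p j k x)
          ≤ (∫ x in Set.Ioc (0:ℝ) 1, p j k x * q j k x)
            + ∫ x in Set.Ioc (0:ℝ) 1, Rfun K q j x * (p j k x / x) := by
      intro k hk
      have hpt : ∀ x ∈ Set.Ioc (0:ℝ) 1, α k x * p j k x
          ≤ p j k x * q j k x + Rfun K q j x * (p j k x / x) := by
        intro x hx
        have hd := hdual j h1 h2 k hk x hx
        have hp0 : 0 ≤ p j k x := hp_nonneg j (hmem j h1 h2) k hk x (hIoc_sub hx)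
        calc α k x * p j k x ≤ (q j k x + (1/x) * Rfun K q j x) * p j k x :=
              mul_le_mul_of_nonneg_right hd hp0
          _ = p j k x * q j k x + Rfun K q j x * (p j k x / x) := by ring
      calc (∫ x in Set.Ioc (0:ℝ) 1, α k x * p j k x)
          ≤ ∫ x in Set.Ioc (0:ℝ) 1, (p j k x * q j k x + Rfun K q j x * (p j k x / x)) :=
            setIntegral_mono_on (int_αp j h1 h2 k hk)
              ((int_pq j h1 h2 k hk).add (int_Rp j h1 h2 k hk)) measurableSet_Ioc hpt
        _ = _ := integral_add (int_pq j h1 h2 k hk) (int_Rp j h1 h2 k hk)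
    calc (∑ k ∈ Finset.Icc 1 K, ∫ x in Set.Ioc (0:ℝ) 1, α k x * p j k x)
        ≤ ∑ k ∈ Finset.Icc 1 K, ((∫ x in Set.Ioc (0:ℝ) 1, p j k x * q j k x)
            + ∫ x in Set.Ioc (0:ℝ) 1, Rfun K q j x * (p j k x / x)) :=
          Finset.sum_le_sum step1k
      _ = (∑ k ∈ Finset.Icc 1 K, ∫ x in Set.Ioc (0:ℝ) 1, p j k x * q j k x)
            + ∑ k ∈ Finset.Icc 1 K, ∫ x in Set.Ioc (0:ℝ) 1, Rfun K q j x * (p j k x / x) :=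
          Finset.sum_add_distrib
      _ = (∑ k ∈ Finset.Icc 1 K, ∫ x in Set.Ioc (0:ℝ) 1, p j k x * q j k x)
            + ∫ x in Set.Ioc (0:ℝ) 1, Rfun K q j x * (Pfun K p j x / x) := by
          congr 1
          rw [← integral_finset_sum _ (fun k hk => int_Rp j h1 h2 k hk)]
          apply setIntegral_congr_fun measurableSet_Ioc
          intro x _
          show (∑ k ∈ Finset.Icc 1 K, Rfun K q j x * (p j k x / x))
            = Rfun K q j x * (Pfun K p j x / x)
          rw [← Finset.mul_sum]
          congr 1
          simp only [Pfun]
          exact (Finset.sum_div _ _ _).symm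
  -- Step 2: Fubini
  have step2 : ∀ j, 1 ≤ j → j ≤ J →
      (∫ x in Set.Ioc (0:ℝ) 1, Rfun K q j x * (Pfun K p j x / x))
        = (∫ y in Set.Ioc (0:ℝ) 1, Qfun K q j y * Sfun K p j y)
          - ∫ y in Set.Ioc (0:ℝ) 1, Qfun K q (j-1) y * Sfun K p j y := by
    intro j h1 h2
    have hg : IntegrableOn (fun y => Qfun K q j y - Qfun K q (j-1) y)
        (Set.Ioc (0:ℝ) 1) volume :=
      (hQf_int j h2).sub (hQf_int (j-1) (le_trans (Nat.sub_le j 1) h2))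
    have e1 : (∫ x in Set.Ioc (0:ℝ) 1, Rfun K q j x * (Pfun K p j x / x))
        = ∫ x in Set.Ioc (0:ℝ) 1, (Pfun K p j x / x)
            * ∫ y in Set.Ioc x 1, (Qfun K q j y - Qfun K q (j-1) y) := by
      apply setIntegral_congr_fun measurableSet_Ioc
      intro x _
      simp only [Rfun]
      exact mul_comm _ _
    have e2 := fubini_swap_aux (fun x => Pfun K p j x / x)
      (fun y => Qfun K q j y - Qfun K q (j-1) y) (hPdiv_int j h1 h2) hg
    have e3 : (∫ y in Set.Ioc (0:ℝ) 1, (Qfun K q j y - Qfun K q (j-1) y)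
          * ∫ x in Set.Ioc (0:ℝ) y, Pfun K p j x / x)
        = ∫ y in Set.Ioc (0:ℝ) 1, (Qfun K q j y * Sfun K p j y
            - Qfun K q (j-1) y * Sfun K p j y) := by
      apply setIntegral_congr_fun measurableSet_Ioc
      intro y _
      simp only [Sfun]
      ring
    rw [e1, e2, e3, integral_sub (int_QfS j h2 j h1 h2)
      (int_QfS (j-1) (le_trans (Nat.sub_le j 1) h2) j h1 h2)]
  -- Step 3: bound on sum of p*q terms, middle case
  have step3 : ∀ j, 1 ≤ j → j < J →
      (∑ k ∈ Finset.Icc 1 K, ∫ x in Set.Ioc (0:ℝ) 1, p j k x * q j k x)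
        ≤ (∫ y in Set.Ioc (0:ℝ) 1, Qfun K q j y * Sfun K p (j+1) y)
          - ∫ y in Set.Ioc (0:ℝ) 1, Qfun K q j y * Sfun K p j y := by
    intro j h1 h2
    have perk : ∀ k ∈ Finset.Icc 1 K,
        (∫ x in Set.Ioc (0:ℝ) 1, p j k x * q j k x)
          ≤ ∫ x in Set.Ioc (0:ℝ) 1, q j k x * (Sfun K p (j+1) x - Sfun K p j x) := by
      intro k hk
      apply setIntegral_mono_on (int_pq j h1 (le_of_lt h2) k hk)
        (int_qdiff j h1 h2 k hk) measurableSet_Ioc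
      intro x hx
      have hq0 : 0 ≤ q j k x := hq_nonneg j (hmem j h1 (le_of_lt h2)) k hk x hx
      have hple := hprim j h1 h2 k hk x (hIoc_sub hx)
      calc p j k x * q j k x = q j k x * p j k x := mul_comm _ _
        _ ≤ q j k x * (Sfun K p (j+1) x - Sfun K p j x) :=
            mul_le_mul_of_nonneg_left hple hq0
    have hsum : (∑ k ∈ Finset.Icc 1 K,
        ∫ x in Set.Ioc (0:ℝ) 1, q j k x * (Sfun K p (j+1) x - Sfun K p j x))
        = (∫ y in Set.Ioc (0:ℝ) 1, Qfun K q j y * Sfun K p (j+1) y)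
          - ∫ y in Set.Ioc (0:ℝ) 1, Qfun K q j y * Sfun K p j y := by
      rw [← integral_finset_sum _ (fun k hk => int_qdiff j h1 h2 k hk)]
      have e : (∫ x in Set.Ioc (0:ℝ) 1,
          ∑ k ∈ Finset.Icc 1 K, q j k x * (Sfun K p (j+1) x - Sfun K p j x))
          = ∫ x in Set.Ioc (0:ℝ) 1, (Qfun K q j x * Sfun K p (j+1) x
            - Qfun K q j x * Sfun K p j x) := by
        apply setIntegral_congr_fun measurableSet_Ioc
        intro x _
        have hj0 : ¬ (j = 0) := by omega
        simp only [Qfun, hj0, if_false]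
        rw [Finset.sum_mul, Finset.sum_mul, ← Finset.sum_sub_distrib]
        apply Finset.sum_congr rfl
        intro k _
        ring
      rw [e, integral_sub (int_QfS j (le_of_lt h2) (j+1) (by omega) (by omega))
        (int_QfS j (le_of_lt h2) j h1 (le_of_lt h2))]
    calc (∑ k ∈ Finset.Icc 1 K, ∫ x in Set.Ioc (0:ℝ) 1, p j k x * q j k x)
        ≤ ∑ k ∈ Finset.Icc 1 K,
            ∫ x in Set.Ioc (0:ℝ) 1, q j k x * (Sfun K p (j+1) x - Sfun K p j x) :=
          Finset.sum_le_sum perk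
      _ = _ := hsum
  -- Step 3': last case
  have step3J : (∑ k ∈ Finset.Icc 1 K, ∫ x in Set.Ioc (0:ℝ) 1, p J k x * q J k x)
      ≤ (∑ k ∈ Finset.Icc 1 K, ∫ x in Set.Ioc (0:ℝ) 1, q J k x)
        - ∫ y in Set.Ioc (0:ℝ) 1, Qfun K q J y * Sfun K p J y := by
    have perk : ∀ k ∈ Finset.Icc 1 K,
        (∫ x in Set.Ioc (0:ℝ) 1, p J k x * q J k x)
          ≤ ∫ x in Set.Ioc (0:ℝ) 1, q J k x * (1 - Sfun K p J x) := by
      intro k hk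
      apply setIntegral_mono_on (int_pq J hJ le_rfl k hk) (int_q1S k hk) measurableSet_Ioc
      intro x hx
      have hq0 : 0 ≤ q J k x := hq_nonneg J (hmem J hJ le_rfl) k hk x hx
      have hple := hprimJ k hk x (hIoc_sub hx)
      calc p J k x * q J k x = q J k x * p J k x := mul_comm _ _
        _ ≤ q J k x * (1 - Sfun K p J x) := mul_le_mul_of_nonneg_left hple hq0
    have hsum : (∑ k ∈ Finset.Icc 1 K,
        ∫ x in Set.Ioc (0:ℝ) 1, q J k x * (1 - Sfun K p J x))
        = (∑ k ∈ Finset.Icc 1 K, ∫ x in Set.Ioc (0:ℝ) 1, q J k x)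
          - ∫ y in Set.Ioc (0:ℝ) 1, Qfun K q J y * Sfun K p J y := by
      have e1 : ∀ k ∈ Finset.Icc 1 K,
          (∫ x in Set.Ioc (0:ℝ) 1, q J k x * (1 - Sfun K p J x))
            = (∫ x in Set.Ioc (0:ℝ) 1, q J k x)
              - ∫ x in Set.Ioc (0:ℝ) 1, q J k x * Sfun K p J x := by
        intro k hk
        have e : (∫ x in Set.Ioc (0:ℝ) 1, q J k x * (1 - Sfun K p J x))
            = ∫ x in Set.Ioc (0:ℝ) 1, (q J k x - q J k x * Sfun K p J x) := by
          apply setIntegral_congr_fun measurableSet_Ioc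
          intro x _
          ring
        rw [e, integral_sub (hq_int' J hJ le_rfl k hk) (int_qS J hJ le_rfl k hk J hJ le_rfl)]
      rw [Finset.sum_congr rfl e1, Finset.sum_sub_distrib]
      congr 1
      rw [← integral_finset_sum _ (fun k hk => int_qS J hJ le_rfl k hk J hJ le_rfl)]
      apply setIntegral_congr_fun measurableSet_Ioc
      intro x _
      have hj0 : ¬ (J = 0) := by omega
      simp only [Qfun, hj0, if_false]
      exact (Finset.sum_mul _ _ _).symm
    calc (∑ k ∈ Finset.Icc 1 K, ∫ x in Set.Ioc (0:ℝ) 1, p J k x * q J k x)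
        ≤ ∑ k ∈ Finset.Icc 1 K, ∫ x in Set.Ioc (0:ℝ) 1, q J k x * (1 - Sfun K p J x) :=
          Finset.sum_le_sum perk
      _ = _ := hsum
  -- telescoping quantity
  set Tf : ℕ → ℝ := fun j => ∫ y in Set.Ioc (0:ℝ) 1, Qfun K q j y * Sfun K p (j+1) y with hTf
  have hT0 : Tf 0 = 0 := by
    rw [hTf]
    simp [Qfun]
  have hTpred : ∀ j, 1 ≤ j → j ≤ J →
      (∫ y in Set.Ioc (0:ℝ) 1, Qfun K q (j-1) y * Sfun K p j y) = Tf (j-1) := by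
    intro j h1 h2
    rw [hTf]
    simp only
    rw [Nat.sub_add_cancel h1]
  -- key per-j estimates
  have keyj : ∀ j, 1 ≤ j → j < J →
      (∑ k ∈ Finset.Icc 1 K, ∫ x in Set.Ioc (0:ℝ) 1, α k x * p j k x)
        ≤ Tf j - Tf (j-1) := by
    intro j h1 h2
    have e1 := step1 j h1 (le_of_lt h2)
    have e2 := step2 j h1 (le_of_lt h2)
    have e3 := step3 j h1 h2
    have e4 := hTpred j h1 (le_of_lt h2)
    have e5 : Tf j = ∫ y in Set.Ioc (0:ℝ) 1, Qfun K q j y * Sfun K p (j+1) y := by rw [hTf]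
    rw [e2, e4] at e1
    rw [← e5] at e3
    linarith
  have keyJ : (∑ k ∈ Finset.Icc 1 K, ∫ x in Set.Ioc (0:ℝ) 1, α k x * p J k x)
      ≤ (∑ k ∈ Finset.Icc 1 K, ∫ x in Set.Ioc (0:ℝ) 1, q J k x) - Tf (J-1) := by
    have e1 := step1 J hJ le_rfl
    have e2 := step2 J hJ le_rfl
    have e4 := hTpred J hJ le_rfl
    rw [e2, e4] at e1
    linarith [step3J]
  -- assemble
  have sum_split : ∀ F : ℕ → ℝ,
      (∑ j ∈ Finset.Icc 1 J, F j) = (∑ j ∈ Finset.Icc 1 (J-1), F j) + F J := by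
    intro F
    conv_lhs => rw [show J = (J-1)+1 from (Nat.sub_add_cancel hJ).symm]
    rw [Finset.sum_Icc_succ_top (by omega)]
    rw [Nat.sub_add_cancel hJ]
  have tel : (∑ j ∈ Finset.Icc 1 (J-1), (Tf j - Tf (j-1))) = Tf (J-1) - Tf 0 := by
    rw [show Finset.Icc 1 (J-1) = Finset.Ico 1 (J-1+1) from (Finset.Ico_add_one_right_eq_Icc 1 (J-1)).symm]
    rw [Finset.sum_Ico_eq_sum_range]
    have hr : J - 1 + 1 - 1 = J - 1 := by omega
    rw [hr]
    have he : ∀ i, Tf (1 + i) - Tf (1 + i - 1) = Tf (i + 1) - Tf i := by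
      intro i
      rw [add_comm 1 i, Nat.add_sub_cancel]
    simp_rw [he]
    exact Finset.sum_range_sub Tf (J-1)
  simp only [intervalIntegral.integral_of_le h01]
  rw [sum_split (fun j => ∑ k ∈ Finset.Icc 1 K, ∫ x in Set.Ioc (0:ℝ) 1, α k x * p j k x)]
  have hmid : (∑ j ∈ Finset.Icc 1 (J-1),
      ∑ k ∈ Finset.Icc 1 K, ∫ x in Set.Ioc (0:ℝ) 1, α k x * p j k x)
      ≤ Tf (J-1) - Tf 0 := by
    rw [← tel]
    apply Finset.sum_le_sum
    intro j hj
    have hj' := Finset.mem_Icc.mp hj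
    exact keyj j hj'.1 (by omega)
  have := keyJ
  rw [hT0] at hmid
  linarith
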